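/- In GL_{2n} with θ(g) = J ᵗg^{-1} J^{-1} and g ∈ GL_{2n}(\bar F) semisimple with N(g) = g θ(g) regular semisimple: if g θ(g) = θ(g) g, then there exists x ∈ GL_{2n}(\bar F) with x g θ(x)^{-1} diagonal; in particular g is θ-semisimple. -/

import Mathlib

open Matrix Polynomial

namespace Stmt17Aux

variable {K : Type*} [Field K]

lemma neg_one_pow_helper {n a b : ℕ} (hab : a + b = 2 * n - 1) (hn : 0 < n) :
    (-1 : K) ^ a = -(-1 : K) ^ b := by
  have h1 : (-1 : K) ^ a * (-1 : K) ^ b = -1 := by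
    rw [← pow_add, hab]
    exact Odd.neg_one_pow ⟨n - 1, by omega⟩
  have h2 : (-1 : K) ^ b * (-1 : K) ^ b = 1 := by
    rw [← pow_add]
    exact Even.neg_one_pow ⟨b, (two_mul b).symm ▸ rfl⟩
  linear_combination ((-1 : K) ^ b) * h1 - ((-1 : K) ^ a) * h2

lemma commutes_diagonal_isDiag {m : ℕ} {lam : Fin m → K} (hinj : Function.Injective lam)
    {C : Matrix (Fin m) (Fin m) K}
    (h : C * Matrix.diagonal lam = Matrix.diagonal lam * C) : C.IsDiag := by
  intro i j hij
  have h' : C i j * lam j = lam i * C i j := by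
    have := congrFun (congrFun h i) j
    rwa [Matrix.mul_diagonal, Matrix.diagonal_mul] at this
  have hlam : lam j ≠ lam i := fun he => hij (hinj he).symm
  have h0 : C i j * (lam j - lam i) = 0 := by ring_nf; linear_combination h'
  rcases mul_eq_zero.mp h0 with h0 | h0
  · exact h0
  · exact absurd (sub_eq_zero.mp h0) hlam

lemma eval_charpoly' {m : ℕ} (N : Matrix (Fin m) (Fin m) K) (x : K) :
    (N.charpoly).eval x = (x • (1 : Matrix (Fin m) (Fin m) K) - N).det := by
  rw [Matrix.charpoly]
  rw [show (Polynomial.eval x : K[X] → K) = (Polynomial.evalRingHom x : K[X] → K) from rfl]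
  rw [RingHom.map_det]
  congr 1
  ext i j
  simp only [RingHom.mapMatrix_apply, Matrix.map_apply]
  by_cases hij : i = j
  · subst hij
    simp [Matrix.charmatrix_apply_eq, Matrix.one_apply]
  · simp [Matrix.charmatrix_apply_ne _ _ _ hij, Matrix.one_apply_ne hij]

lemma even_card_of_inv_free [CharZero K] (S : Finset K) (hclosed : ∀ a ∈ S, a⁻¹ ∈ S)
    (hfree : ∀ a ∈ S, a⁻¹ ≠ a) : Even S.card := by
  have h1 : ∏ _x ∈ S, (-1 : K) = 1 :=
    Finset.prod_involution (fun a _ => a⁻¹) (fun a _ => by ring)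
      (fun a ha _ => hfree a ha) hclosed (fun a _ => inv_inv a)
  rw [Finset.prod_const] at h1
  exact (neg_one_pow_eq_one_iff_even (by norm_num : (-1 : K) ≠ 1)).mp h1

lemma exists_half (k : ℕ) : ∀ (S : Finset K), (∀ a ∈ S, a⁻¹ ∈ S) →
    (∀ a ∈ S, a⁻¹ ≠ a) → S.card = 2 * k →
    ∃ T, T ⊆ S ∧ T.card = k ∧ ∀ a ∈ T, a⁻¹ ∉ T := by
  induction k with
  | zero =>
    intro S _ _ hcard
    exact ⟨∅, Finset.empty_subset _, by simp, by simp⟩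
  | succ k ih =>
    intro S hclosed hfree hcard
    classical
    have hpos : 0 < S.card := by omega
    obtain ⟨a, ha⟩ := Finset.card_pos.mp hpos
    have hainv : a⁻¹ ∈ S.erase a := Finset.mem_erase.mpr ⟨hfree a ha, hclosed a ha⟩
    set S' := (S.erase a).erase a⁻¹ with hS'
    have hmem' : ∀ b, b ∈ S' ↔ b ∈ S ∧ b ≠ a ∧ b ≠ a⁻¹ := by
      intro b
      simp only [hS', Finset.mem_erase]
      tauto
    have hS'sub : S' ⊆ S := fun b hb => ((hmem' b).mp hb).1
    have hcard' : S'.card = 2 * k := by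
      rw [hS', Finset.card_erase_of_mem hainv, Finset.card_erase_of_mem ha, hcard]
      omega
    have hclosed' : ∀ b ∈ S', b⁻¹ ∈ S' := by
      intro b hb
      rw [hmem'] at hb ⊢
      obtain ⟨hbS, hba, hbai⟩ := hb
      refine ⟨hclosed b hbS, ?_, ?_⟩
      · intro he; exact hbai (by rw [← he, inv_inv])
      · intro he; exact hba (by simpa using congrArg Inv.inv he)
    have hfree' : ∀ b ∈ S', b⁻¹ ≠ b := fun b hb => hfree b (hS'sub hb)
    obtain ⟨T', hT'sub, hT'card, hT'inv⟩ := ih S' hclosed' hfree' hcard'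
    refine ⟨insert a T', ?_, ?_, ?_⟩
    · exact Finset.insert_subset ha (hT'sub.trans hS'sub)
    · rw [Finset.card_insert_of_notMem, hT'card]
      intro haT'
      exact ((hmem' a).mp (hT'sub haT')).2.1 rfl
    · intro b hb
      rcases Finset.mem_insert.mp hb with rfl | hbT'
      · intro hbad
        rcases Finset.mem_insert.mp hbad with h1 | h1
        · exact hfree b (ha) h1
        · exact ((hmem' _).mp (hT'sub h1)).2.2 rfl
      · intro hbad
        rcases Finset.mem_insert.mp hbad with h1 | h1
        · exact ((hmem' b).mp (hT'sub hbT')).2.2 (by rw [← h1, inv_inv])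
        · exact hT'inv b hbT' h1

end Stmt17Aux

set_option maxHeartbeats 1000000 in
/-- Let K be an algebraically closed field of characteristic zero, J the
antidiagonal matrix of size 2n with (i, 2n+1-i)-entry (-1)^{i-1}, and
θ(g) = J ᵗg⁻¹ J⁻¹.  If g ∈ GL_{2n}(K) is semisimple (diagonalizable),
commutes with θ(g), and N(g) = g·θ(g) is regular semisimple (its
characteristic polynomial is squarefree), then there exists x ∈ GL_{2n}(K)
with x·g·θ(x)⁻¹ diagonal; in particular g is θ-semisimple.
(Note θ(x)⁻¹ = J ᵗx J⁻¹.) -/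
theorem stmt17 {K : Type*} [Field K] [IsAlgClosed K] [CharZero K]
    {n : ℕ} (hn : 0 < n)
    (J g : Matrix (Fin (2 * n)) (Fin (2 * n)) K)
    (hJ : J = Matrix.of fun (i j : Fin (2 * n)) =>
      if (i : ℕ) + (j : ℕ) = 2 * n - 1 then (-1 : K) ^ (i : ℕ) else 0)
    (hg : IsUnit g.det)
    (hss : ∃ P : Matrix (Fin (2 * n)) (Fin (2 * n)) K,
      IsUnit P.det ∧ (P⁻¹ * g * P).IsDiag)
    (hcomm : g * (J * (g.transpose)⁻¹ * J⁻¹) = (J * (g.transpose)⁻¹ * J⁻¹) * g)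
    (hreg : Squarefree ((g * (J * (g.transpose)⁻¹ * J⁻¹)).charpoly)) :
    ∃ x : Matrix (Fin (2 * n)) (Fin (2 * n)) K, IsUnit x.det ∧
      (x * g * (J * x.transpose * J⁻¹)).IsDiag := by
  classical
  clear hss
  -- ### Properties of J
  have hJdef : ∀ i j : Fin (2 * n), J i j = if j = Fin.rev i then (-1 : K) ^ (i : ℕ) else 0 := by
    intro i j
    rw [hJ]
    have hiff : ((i : ℕ) + (j : ℕ) = 2 * n - 1) ↔ j = Fin.rev i := by
      rw [Fin.ext_iff, Fin.val_rev]
      omega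
    exact if_congr hiff rfl rfl
  have hJJ : J * J = -1 := by
    ext i j
    rw [Matrix.mul_apply]
    simp only [hJdef, ite_mul, zero_mul]
    rw [Finset.sum_ite_eq' Finset.univ (Fin.rev i)
      (fun k => (-1 : K) ^ (i : ℕ) * (if j = Fin.rev k then (-1 : K) ^ (k : ℕ) else 0))]
    simp only [Finset.mem_univ, if_true, Fin.rev_rev]
    by_cases hij : j = i
    · subst hij
      simp only [if_pos rfl, if_true, Matrix.neg_apply, Matrix.one_apply_eq]
      rw [← pow_add]
      have : (j : ℕ) + (Fin.rev j : ℕ) = 2 * n - 1 := by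
        rw [Fin.val_rev]; omega
      rw [this]
      exact Odd.neg_one_pow ⟨n - 1, by omega⟩
    · simp [hij, Matrix.one_apply_ne (Ne.symm hij)]
  have hJT : Jᵀ = -J := by
    ext i j
    rw [Matrix.transpose_apply, Matrix.neg_apply, hJdef, hJdef]
    by_cases h : i = Fin.rev j
    · have h' : j = Fin.rev i := by rw [h, Fin.rev_rev]
      rw [if_pos h, if_pos h']
      exact Stmt17Aux.neg_one_pow_helper (by rw [Fin.ext_iff, Fin.val_rev] at h; omega) hn
    · have h' : ¬ j = Fin.rev i := fun hc => h (by rw [hc, Fin.rev_rev])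
      rw [if_neg h, if_neg h', neg_zero]
  have hJu : IsUnit J.det := by
    apply IsUnit.of_mul_eq_one J.det
    rw [← Matrix.det_mul, hJJ]
    rw [show (-1 : Matrix (Fin (2*n)) (Fin (2*n)) K) = -(1 : Matrix _ _ K) from rfl,
      Matrix.det_neg, Matrix.det_one]
    simp [Even.neg_one_pow (even_two_mul n)]
  have hJinv : J⁻¹ = -J := by
    apply Matrix.inv_eq_right_inv
    rw [Matrix.mul_neg, hJJ, neg_neg]
  have hJJ1 : J * J⁻¹ = 1 := Matrix.mul_nonsing_inv J hJu
  have hJ1J : J⁻¹ * J = 1 := Matrix.nonsing_inv_mul J hJu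
  have hnJinv : (-J)⁻¹ = J := Matrix.inv_eq_right_inv (by rw [Matrix.neg_mul, hJJ, neg_neg])
  -- ### The twisted involution τ : A ↦ J (Aᵀ)⁻¹ J⁻¹
  have hτmul : ∀ A B : Matrix (Fin (2 * n)) (Fin (2 * n)) K,
      J * ((A * B).transpose)⁻¹ * J⁻¹
      = (J * (A.transpose)⁻¹ * J⁻¹) * (J * (B.transpose)⁻¹ * J⁻¹) := by
    intro A B
    rw [Matrix.transpose_mul, Matrix.mul_inv_rev]
    calc J * (Aᵀ⁻¹ * Bᵀ⁻¹) * J⁻¹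
        = J * Aᵀ⁻¹ * (J⁻¹ * J) * (Bᵀ⁻¹ * J⁻¹) := by
          rw [hJ1J, Matrix.mul_one]; simp only [Matrix.mul_assoc]
      _ = (J * Aᵀ⁻¹ * J⁻¹) * (J * Bᵀ⁻¹ * J⁻¹) := by simp only [Matrix.mul_assoc]
  have hτinvol : ∀ A : Matrix (Fin (2 * n)) (Fin (2 * n)) K, IsUnit A.det →
      J * (((J * (A.transpose)⁻¹ * J⁻¹).transpose))⁻¹ * J⁻¹ = A := by
    intro A hA
    have hJTu : IsUnit (Jᵀ).det := by rwa [Matrix.det_transpose]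
    have h1 : (J * Aᵀ⁻¹ * J⁻¹)ᵀ = (Jᵀ)⁻¹ * A⁻¹ * Jᵀ := by
      rw [Matrix.transpose_mul, Matrix.transpose_mul, Matrix.transpose_nonsing_inv,
        Matrix.transpose_nonsing_inv, Matrix.transpose_transpose, Matrix.mul_assoc]
    have h2 : ((J * Aᵀ⁻¹ * J⁻¹)ᵀ)⁻¹ = (Jᵀ)⁻¹ * A * Jᵀ := by
      rw [h1, Matrix.mul_inv_rev, Matrix.mul_inv_rev,
        Matrix.nonsing_inv_nonsing_inv A hA, Matrix.nonsing_inv_nonsing_inv Jᵀ hJTu,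
        Matrix.mul_assoc]
    rw [h2, hJT, hnJinv, hJinv]
    simp only [Matrix.mul_neg, Matrix.neg_mul, neg_neg, Matrix.mul_assoc]
    rw [← Matrix.mul_assoc J J, hJJ]
    simp only [Matrix.neg_mul, neg_neg, Matrix.one_mul, neg_one_mul, mul_neg_one,
      Matrix.mul_one]
  -- ### The norm N = g·θ(g)
  set N : Matrix (Fin (2 * n)) (Fin (2 * n)) K := g * (J * (g.transpose)⁻¹ * J⁻¹) with hN
  have hgT : IsUnit gᵀ.det := by rwa [Matrix.det_transpose]
  have hτgu : IsUnit (J * (gᵀ)⁻¹ * J⁻¹).det := by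
    rw [Matrix.det_mul, Matrix.det_mul]
    exact (hJu.mul (Matrix.isUnit_nonsing_inv_det gᵀ hgT)).mul
      (Matrix.isUnit_nonsing_inv_det J hJu)
  have hNu : IsUnit N.det := by rw [hN, Matrix.det_mul]; exact hg.mul hτgu
  have hNdet : N.det = 1 := by
    have hdet : (J * (gᵀ)⁻¹ * J⁻¹).det = (g.det)⁻¹ := by
      rw [Matrix.det_mul, Matrix.det_mul, Matrix.det_nonsing_inv, Matrix.det_nonsing_inv,
        Matrix.det_transpose, Ring.inverse_eq_inv, Ring.inverse_eq_inv]
      field_simp [hg.ne_zero, hJu.ne_zero]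
    rw [hN, Matrix.det_mul, hdet, mul_inv_cancel₀ hg.ne_zero]
  have hgN : g * N = N * g := by
    calc g * N = g * ((J * (gᵀ)⁻¹ * J⁻¹) * g) := by rw [hcomm]
      _ = N * g := by rw [hN]; simp only [Matrix.mul_assoc]
  have hτN : J * (N.transpose)⁻¹ * J⁻¹ = N := by
    rw [hN, hτmul g (J * (gᵀ)⁻¹ * J⁻¹), hτinvol g hg, ← hN]
    exact hcomm.symm
  -- ### The spectrum of N
  set p := N.charpoly with hp
  have hmonic : p.Monic := N.charpoly_monic
  have hp0 : p ≠ 0 := hmonic.ne_zero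
  have hnodup : p.roots.Nodup :=
    Polynomial.nodup_roots (PerfectField.separable_iff_squarefree.mpr hreg)
  set S : Finset K := ⟨p.roots, hnodup⟩ with hS
  have hmemS : ∀ x : K, x ∈ S ↔ p.eval x = 0 := by
    intro x
    show x ∈ p.roots ↔ _
    rw [Polynomial.mem_roots hp0]
    exact ⟨fun h => h, fun h => h⟩
  have heval : ∀ x : K, p.eval x = (x • (1 : Matrix (Fin (2*n)) (Fin (2*n)) K) - N).det :=
    Stmt17Aux.eval_charpoly' N
  have hcardS : S.card = 2 * n := by
    show Multiset.card p.roots = 2 * n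
    rw [Polynomial.splits_iff_card_roots.mp (IsAlgClosed.splits (k := K) p)]
    rw [hp, Matrix.charpoly_natDegree_eq_dim]
    simp
  have h0S : (0 : K) ∉ S := by
    rw [hmemS, heval]
    intro h
    rw [zero_smul, zero_sub, Matrix.det_neg, hNdet, Fintype.card_fin] at h
    rw [Even.neg_one_pow (even_two_mul n), mul_one] at h
    exact one_ne_zero h
  have hfuneq : ∀ μ : K, μ ≠ 0 → p.eval μ = μ ^ (2*n) * p.eval μ⁻¹ := by
    intro μ hμ
    have h1 : μ • (1 : Matrix (Fin (2*n)) (Fin (2*n)) K) - N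
        = J * (μ • (1 : Matrix (Fin (2*n)) (Fin (2*n)) K) - Nᵀ⁻¹) * J⁻¹ := by
      rw [Matrix.mul_sub, Matrix.sub_mul, Matrix.mul_smul, Matrix.smul_mul, Matrix.mul_one,
        Matrix.mul_nonsing_inv J hJu, hτN]
    have h2 : μ • (1 : Matrix (Fin (2*n)) (Fin (2*n)) K) - Nᵀ⁻¹
        = (μ • (1 : Matrix (Fin (2*n)) (Fin (2*n)) K) - N⁻¹)ᵀ := by
      rw [Matrix.transpose_sub, Matrix.transpose_smul, Matrix.transpose_one,
        Matrix.transpose_nonsing_inv]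
    have hx : (-μ) • (μ⁻¹ • (1 : Matrix (Fin (2*n)) (Fin (2*n)) K) - N)
        = μ • N - 1 := by
      rw [smul_sub, smul_smul, neg_mul, mul_inv_cancel₀ hμ]
      module
    have h3 : μ • (1 : Matrix (Fin (2*n)) (Fin (2*n)) K) - N⁻¹
        = N⁻¹ * ((-μ) • (μ⁻¹ • (1 : Matrix (Fin (2*n)) (Fin (2*n)) K) - N)) := by
      rw [hx, Matrix.mul_sub, Matrix.mul_smul, Matrix.mul_one,
        Matrix.nonsing_inv_mul N hNu]
    have hdJ : J.det * J⁻¹.det = 1 := by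
      rw [← Matrix.det_mul, Matrix.mul_nonsing_inv J hJu, Matrix.det_one]
    calc p.eval μ = (μ • (1 : Matrix (Fin (2*n)) (Fin (2*n)) K) - N).det := heval μ
      _ = J.det * (μ • (1 : Matrix (Fin (2*n)) (Fin (2*n)) K) - Nᵀ⁻¹).det * J⁻¹.det := by
          rw [h1, Matrix.det_mul, Matrix.det_mul]
      _ = (μ • (1 : Matrix (Fin (2*n)) (Fin (2*n)) K) - Nᵀ⁻¹).det := by
          rw [mul_comm J.det, mul_assoc, hdJ, mul_one]
      _ = (μ • (1 : Matrix (Fin (2*n)) (Fin (2*n)) K) - N⁻¹).det := by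
          rw [h2, Matrix.det_transpose]
      _ = N⁻¹.det * ((-μ) • (μ⁻¹ • (1 : Matrix (Fin (2*n)) (Fin (2*n)) K) - N)).det := by
          rw [h3, Matrix.det_mul]
      _ = μ ^ (2*n) * p.eval μ⁻¹ := by
          rw [Matrix.det_smul, Matrix.det_nonsing_inv, hNdet, Ring.inverse_one, one_mul,
            Fintype.card_fin, Even.neg_pow (even_two_mul n), heval]
  have hSclosed : ∀ a ∈ S, a⁻¹ ∈ S := by
    intro a ha
    have ha0 : a ≠ 0 := fun h => h0S (h ▸ ha)
    rw [hmemS] at ha ⊢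
    have hthis := hfuneq a ha0
    rw [ha] at hthis
    have hpow : a ^ (2*n) ≠ 0 := pow_ne_zero _ ha0
    exact (mul_eq_zero.mp hthis.symm).resolve_left hpow
  have hprodS : ∏ a ∈ S, a = 1 := by
    have hd := Matrix.det_eq_prod_roots_charpoly N
    rw [hNdet] at hd
    rw [hS]
    show Multiset.prod (Multiset.map id p.roots) = 1
    rw [Multiset.map_id]
    exact hd.symm
  have hSfree : ∀ a ∈ S, a⁻¹ ≠ a := by
    have hone : ¬ ((1 : K) ∈ S ∨ (-1 : K) ∈ S) := by
      intro hor
      set S' : Finset K := (S.erase 1).erase (-1) with hS'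
      have hm' : ∀ b, b ∈ S' ↔ b ∈ S ∧ b ≠ 1 ∧ b ≠ -1 := by
        intro b
        simp only [hS', Finset.mem_erase]
        tauto
      have hsub' : S' ⊆ S := fun b hb => ((hm' b).mp hb).1
      have hc' : ∀ b ∈ S', b⁻¹ ∈ S' := by
        intro b hb
        rw [hm'] at hb ⊢
        obtain ⟨hbS, hb1, hbm1⟩ := hb
        refine ⟨hSclosed b hbS, ?_, ?_⟩
        · intro h; exact hb1 (by rw [← inv_inv b, h, inv_one])
        · intro h
          apply hbm1
          rw [← inv_inv b, h]
          norm_num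
      have hf' : ∀ b ∈ S', b⁻¹ ≠ b := by
        intro b hb h
        rw [hm'] at hb
        obtain ⟨hbS, hb1, hbm1⟩ := hb
        have hb0 : b ≠ 0 := fun hz => h0S (hz ▸ hbS)
        have : b * b = 1 := by nth_rewrite 1 [← h]; exact inv_mul_cancel₀ hb0
        rcases mul_self_eq_one_iff.mp this with h1 | h1
        · exact hb1 h1
        · exact hbm1 h1
      have heven : Even S'.card := Stmt17Aux.even_card_of_inv_free S' hc' hf'
      have hprod' : ∏ a ∈ S', a = 1 := by
        apply Finset.prod_involution (fun a _ => a⁻¹)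
        · intro a ha
          exact mul_inv_cancel₀ (fun hz => h0S (hz ▸ hsub' ha))
        · intro a ha _; exact hf' a ha
        · intro a _; exact inv_inv a
        · exact hc'
      have hne : (-1 : K) ≠ 1 := by norm_num
      rcases hor with h1 | h1
      · by_cases h2 : (-1 : K) ∈ S
        · have hm1e : (-1 : K) ∈ S.erase 1 := Finset.mem_erase.mpr ⟨hne, h2⟩
          have e1 : ∏ a ∈ S, a = 1 * ∏ a ∈ S.erase 1, a := (Finset.mul_prod_erase S id h1).symm
          have e2 : ∏ a ∈ S.erase 1, a = (-1) * ∏ a ∈ S', a :=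
            (Finset.mul_prod_erase (S.erase 1) id hm1e).symm
          rw [e1, e2, hprod', one_mul, mul_one] at hprodS
          exact hne hprodS
        · have : S' = S.erase 1 := by
            rw [hS']
            apply Finset.erase_eq_of_notMem
            intro hx
            exact h2 (Finset.mem_of_mem_erase hx)
          rw [this, Finset.card_erase_of_mem h1, hcardS] at heven
          obtain ⟨k, hk⟩ := heven
          omega
      · by_cases h2 : (1 : K) ∈ S
        · have hm1e : (-1 : K) ∈ S.erase 1 := Finset.mem_erase.mpr ⟨hne, h1⟩
          have e1 : ∏ a ∈ S, a = 1 * ∏ a ∈ S.erase 1, a := (Finset.mul_prod_erase S id h2).symm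
          have e2 : ∏ a ∈ S.erase 1, a = (-1) * ∏ a ∈ S', a :=
            (Finset.mul_prod_erase (S.erase 1) id hm1e).symm
          rw [e1, e2, hprod', one_mul, mul_one] at hprodS
          exact hne hprodS
        · have h1' : S.erase 1 = S := Finset.erase_eq_of_notMem h2
          have : S'.card = S.card - 1 := by
            rw [hS', h1', Finset.card_erase_of_mem h1]
          rw [this, hcardS] at heven
          obtain ⟨k, hk⟩ := heven
          omega
    intro a ha h
    have ha0 : a ≠ 0 := fun hz => h0S (hz ▸ ha)
    have : a * a = 1 := by nth_rewrite 1 [← h]; exact inv_mul_cancel₀ ha0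
    rcases mul_self_eq_one_iff.mp this with h1 | h1
    · exact hone (Or.inl (h1 ▸ ha))
    · exact hone (Or.inr (h1 ▸ ha))
  have hSroot : ∀ a ∈ S, (a • (1 : Matrix (Fin (2*n)) (Fin (2*n)) K) - N).det = 0 := by
    intro a ha
    rw [← heval]
    exact (hmemS a).mp ha
  clear_value N p S
  clear hreg hp hmemS heval hfuneq hprodS hN hcomm
  -- ### A compatible enumeration of the spectrum
  obtain ⟨T, hTS, hTcard, hTinv⟩ := Stmt17Aux.exists_half n S hSclosed hSfree hcardS
  set e : Fin n → K := fun i => ((Finset.equivFinOfCardEq hTcard).symm i : K) with he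
  have heT : ∀ i, e i ∈ T := fun i => ((Finset.equivFinOfCardEq hTcard).symm i).2
  have heinj : Function.Injective e := fun i j hij => by
    have := Subtype.coe_injective (a₁ := (Finset.equivFinOfCardEq hTcard).symm i)
      (a₂ := (Finset.equivFinOfCardEq hTcard).symm j) hij
    exact (Finset.equivFinOfCardEq hTcard).symm.injective this
  have he0 : ∀ i, e i ≠ 0 := fun i h => h0S (h ▸ hTS (heT i))
  set lam : Fin (2 * n) → K := fun i =>
    if h : (i : ℕ) < n then e ⟨i, h⟩ else (e ⟨2 * n - 1 - (i : ℕ), by omega⟩)⁻¹ with hlam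
  have hlamS : ∀ i, lam i ∈ S := by
    intro i
    simp only [hlam]
    by_cases h : (i : ℕ) < n
    · rw [dif_pos h]; exact hTS (heT _)
    · rw [dif_neg h]; exact hSclosed _ (hTS (heT _))
  have hlam0 : ∀ i, lam i ≠ 0 := fun i h => h0S (h ▸ hlamS i)
  have hlaminj : Function.Injective lam := by
    intro i j hij
    simp only [hlam] at hij
    by_cases hi : (i : ℕ) < n <;> by_cases hj : (j : ℕ) < n
    · rw [dif_pos hi, dif_pos hj] at hij
      have := heinj hij
      rw [Fin.mk.injEq] at this
      exact Fin.ext this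
    · rw [dif_pos hi, dif_neg hj] at hij
      exfalso
      apply hTinv _ (heT ⟨2 * n - 1 - (j : ℕ), by omega⟩)
      rw [← hij]
      exact heT _
    · rw [dif_neg hi, dif_pos hj] at hij
      exfalso
      apply hTinv _ (heT ⟨2 * n - 1 - (i : ℕ), by omega⟩)
      rw [hij]
      exact heT _
    · rw [dif_neg hi, dif_neg hj] at hij
      have := inv_injective hij
      have h2 := heinj this
      rw [Fin.mk.injEq] at h2
      have hi' := i.isLt
      have hj' := j.isLt
      exact Fin.ext (by omega)
  have hlamrev : ∀ i, lam (Fin.rev i) = (lam i)⁻¹ := by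
    intro i
    have hrv : ((Fin.rev i : Fin (2 * n)) : ℕ) = 2 * n - 1 - (i : ℕ) := by
      rw [Fin.val_rev]; omega
    simp only [hlam]
    by_cases h : (i : ℕ) < n
    · have h2 : ¬ ((Fin.rev i : Fin (2 * n)) : ℕ) < n := by rw [hrv]; omega
      rw [dif_neg h2, dif_pos h]
      exact congrArg (fun t => (e t)⁻¹)
        (Fin.ext (by simp only [hrv]; have := i.isLt; omega))
    · have h2 : ((Fin.rev i : Fin (2 * n)) : ℕ) < n := by rw [hrv]; have := i.isLt; omega
      rw [dif_pos h2, dif_neg h, inv_inv]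
      exact congrArg e (Fin.ext (by simp only [hrv]))
  clear_value lam e
  clear hlam he heT heinj he0 hTinv hTS hTcard
  -- ### Eigenvectors and the diagonalizing matrix
  have hev : ∀ i : Fin (2 * n), ∃ v : Fin (2 * n) → K, v ≠ 0 ∧ N.mulVec v = lam i • v := by
    intro i
    obtain ⟨v, hv0, hv⟩ := (Matrix.exists_mulVec_eq_zero_iff).mpr (hSroot _ (hlamS i))
    refine ⟨v, hv0, ?_⟩
    rw [Matrix.sub_mulVec, Matrix.smul_mulVec, Matrix.one_mulVec, sub_eq_zero] at hv
    exact hv.symm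
  choose v hv0 hvN using hev
  have hli : LinearIndependent K v := by
    apply Module.End.eigenvectors_linearIndependent' (Matrix.mulVecLin N) lam hlaminj v
    intro i
    constructor
    · rw [Module.End.mem_eigenspace_iff]
      exact hvN i
    · exact hv0 i
  set P : Matrix (Fin (2 * n)) (Fin (2 * n)) K := Matrix.of (fun i j => v j i) with hP
  have hPcols : (fun i => Pᵀ i) = v := rfl
  have hPu : IsUnit P := Matrix.linearIndependent_cols_iff_isUnit.mp (show LinearIndependent K P.col from hli)
  have hPd : IsUnit P.det := (Matrix.isUnit_iff_isUnit_det P).mp hPu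
  set Λ : Matrix (Fin (2 * n)) (Fin (2 * n)) K := Matrix.diagonal lam with hΛ
  have hNP : N * P = P * Λ := by
    ext i j
    rw [hΛ, Matrix.mul_diagonal, Matrix.mul_apply]
    have hc := congrFun (hvN j) i
    simp only [Matrix.mulVec, dotProduct, Pi.smul_apply, smul_eq_mul] at hc
    rw [hP]
    simp only [Matrix.of_apply]
    rw [hc, mul_comm]
  have hPinvN : P⁻¹ * N = Λ * P⁻¹ := by
    calc P⁻¹ * N = P⁻¹ * N * (P * P⁻¹) := by rw [Matrix.mul_nonsing_inv P hPd, Matrix.mul_one]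
      _ = P⁻¹ * (N * P) * P⁻¹ := by simp only [Matrix.mul_assoc]
      _ = P⁻¹ * (P * Λ) * P⁻¹ := by rw [hNP]
      _ = (P⁻¹ * P) * Λ * P⁻¹ := by simp only [Matrix.mul_assoc]
      _ = Λ * P⁻¹ := by rw [Matrix.nonsing_inv_mul P hPd, Matrix.one_mul]
  have hJdiag : ∀ d : Fin (2 * n) → K,
      J * Matrix.diagonal d = Matrix.diagonal (fun i => d (Fin.rev i)) * J := by
    intro d
    ext i j
    rw [Matrix.mul_diagonal, Matrix.diagonal_mul, hJdef]
    by_cases h : j = Fin.rev i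
    · rw [if_pos h, h]; ring
    · rw [if_neg h, mul_zero, zero_mul]
  have hJΛ : J * Λ⁻¹ * J⁻¹ = Λ := by
    have hΛinv : Λ⁻¹ = Matrix.diagonal (fun i => (lam i)⁻¹) := by
      apply Matrix.inv_eq_right_inv
      rw [hΛ, Matrix.diagonal_mul_diagonal]
      have hone : (fun i => lam i * (lam i)⁻¹) = fun _ => (1 : K) :=
        funext fun i => mul_inv_cancel₀ (hlam0 i)
      rw [hone, Matrix.diagonal_one]
    rw [hΛinv, hJdiag]
    have : (fun i => (lam (Fin.rev i))⁻¹) = lam := by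
      funext i
      rw [hlamrev, inv_inv]
    rw [this, hΛ, Matrix.mul_assoc, Matrix.mul_nonsing_inv J hJu, Matrix.mul_one]
  set θP : Matrix (Fin (2 * n)) (Fin (2 * n)) K := J * (Pᵀ)⁻¹ * J⁻¹ with hθP
  have hNθP : N * θP = θP * Λ := by
    calc N * θP = (J * (N.transpose)⁻¹ * J⁻¹) * (J * (Pᵀ)⁻¹ * J⁻¹) := by rw [hτN]
      _ = J * (((N * P).transpose))⁻¹ * J⁻¹ := by rw [hτmul N P]
      _ = J * (((P * Λ).transpose))⁻¹ * J⁻¹ := by rw [hNP]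
      _ = (J * (Pᵀ)⁻¹ * J⁻¹) * (J * (Λᵀ)⁻¹ * J⁻¹) := by rw [hτmul P Λ]
      _ = θP * (J * Λ⁻¹ * J⁻¹) := by rw [hθP, hΛ, Matrix.diagonal_transpose]
      _ = θP * Λ := by rw [hJΛ]
  have hS0comm : (P⁻¹ * θP) * Λ = Λ * (P⁻¹ * θP) := by
    calc (P⁻¹ * θP) * Λ = P⁻¹ * (θP * Λ) := by rw [Matrix.mul_assoc]
      _ = P⁻¹ * (N * θP) := by rw [hNθP]
      _ = (P⁻¹ * N) * θP := by rw [Matrix.mul_assoc]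
      _ = (Λ * P⁻¹) * θP := by rw [hPinvN]
      _ = Λ * (P⁻¹ * θP) := by rw [Matrix.mul_assoc]
  have hS0diag : (P⁻¹ * θP).IsDiag := Stmt17Aux.commutes_diagonal_isDiag hlaminj hS0comm
  have hDcomm : (P⁻¹ * g * P) * Λ = Λ * (P⁻¹ * g * P) := by
    calc (P⁻¹ * g * P) * Λ = P⁻¹ * (g * (P * Λ)) := by simp only [Matrix.mul_assoc]
      _ = P⁻¹ * (g * (N * P)) := by rw [hNP]
      _ = P⁻¹ * ((g * N) * P) := by simp only [Matrix.mul_assoc]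
      _ = P⁻¹ * ((N * g) * P) := by rw [hgN]
      _ = (P⁻¹ * N) * (g * P) := by simp only [Matrix.mul_assoc]
      _ = (Λ * P⁻¹) * (g * P) := by rw [hPinvN]
      _ = Λ * (P⁻¹ * g * P) := by simp only [Matrix.mul_assoc]
  have hDdiag : (P⁻¹ * g * P).IsDiag := Stmt17Aux.commutes_diagonal_isDiag hlaminj hDcomm
  refine ⟨P⁻¹, Matrix.isUnit_nonsing_inv_det P hPd, ?_⟩
  have hPT : (P⁻¹)ᵀ = (Pᵀ)⁻¹ := Matrix.transpose_nonsing_inv P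
  have hfinal : P⁻¹ * g * (J * (P⁻¹)ᵀ * J⁻¹) = (P⁻¹ * g * P) * (P⁻¹ * θP) := by
    rw [hPT, ← hθP]
    calc P⁻¹ * g * θP = P⁻¹ * (g * (P * P⁻¹) * θP) := by
          rw [Matrix.mul_nonsing_inv P hPd, Matrix.mul_one]
          simp only [Matrix.mul_assoc]
      _ = (P⁻¹ * g * P) * (P⁻¹ * θP) := by simp only [Matrix.mul_assoc]
  rw [hfinal]
  rw [← Matrix.IsDiag.diagonal_diag hDdiag, ← Matrix.IsDiag.diagonal_diag hS0diag,
    Matrix.diagonal_mul_diagonal]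
  exact Matrix.isDiag_diagonal _
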